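/- Let q ∈ K be a primitive l-th root of unity (l ≥ 1) in a field K of characteristic zero, and let ψ ∈ lie(x,y) be homogeneous of weight 2n with l dividing 2n, such that every monomial of ψ has y-degree at least 2k for some natural number k < n, and such that ψ satisfies the antisymmetry relation ψ(x,y) = -ψ(y,x) and the hexagon relation ψ(x,y) + ψ(y,z) + ψ(z,x) = 0 under the substitution z = -x-y. Let ν(ψ) = (ψ(-x-y, x), ψ(-x-y, y)) be the associated tangential derivation. Then the bidegree (2n-2k, 2k) component (x-degree 2n-2k, y-degree 2k) of qdiv(ν(ψ)) equals qtr( y·∂_y ( ψ^{(2n-2k, 2k)} ) ), where ψ^{(2n-2k, 2k)} is the bidegree (2n-2k, 2k) component of ψ. -/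

import Mathlib

noncomputable section

/-- The bidegree `(p, t)` projection of the free associative algebra on two generators:
keep only the words with exactly `p` letters `x = ι 0` and `t` letters `y = ι 1`. -/
def bidegProj (K : Type*) [CommRing K] (p t : ℕ) (z : FreeAlgebra K (Fin 2)) :
    FreeAlgebra K (Fin 2) :=
  ((FreeAlgebra.basisFreeMonoid K (Fin 2)).repr z).sum fun w c =>
    if (FreeMonoid.toList w).count (0 : Fin 2) = p ∧ (FreeMonoid.toList w).count 1 = t
    then c • FreeAlgebra.basisFreeMonoid K (Fin 2) w else 0

namespace QdivAux

open MonoidAlgebra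

variable {K : Type*} [CommRing K]

abbrev Bm (K : Type*) [CommRing K] := MonoidAlgebra K (FreeMonoid (Fin 2))

abbrev c0 (w : FreeMonoid (Fin 2)) : ℕ := (FreeMonoid.toList w).count (0 : Fin 2)
abbrev c1 (w : FreeMonoid (Fin 2)) : ℕ := (FreeMonoid.toList w).count (1 : Fin 2)

def Q (K : Type*) [CommRing K] (p t : ℕ) : Bm K →ₗ[K] Bm K :=
  (coeffLinearEquiv K : Bm K ≃ₗ[K] _).symm.toLinearMap ∘ₗ
    (Finsupp.lsum K fun w => if c0 w = p ∧ c1 w = t then Finsupp.lsingle w else 0) ∘ₗ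
    (coeffLinearEquiv K : Bm K ≃ₗ[K] _).toLinearMap

lemma Q_single (p t : ℕ) (w : FreeMonoid (Fin 2)) (c : K) :
    Q K p t (single w c) = if c0 w = p ∧ c1 w = t then single w c else 0 := by
  have h : Q K p t (single w c)
      = MonoidAlgebra.ofCoeff ((if c0 w = p ∧ c1 w = t then Finsupp.lsingle w
          else (0 : K →ₗ[K] FreeMonoid (Fin 2) →₀ K)) c) := by
    rw [Q]; exact congrArg MonoidAlgebra.ofCoeff (Finsupp.sum_single_index (by simp))
  rw [h]
  by_cases hc : c0 w = p ∧ c1 w = t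
  · rw [if_pos hc, if_pos hc]; rfl
  · rw [if_neg hc, if_neg hc]; rfl

lemma c0_mul (u w : FreeMonoid (Fin 2)) : c0 (u * w) = c0 u + c0 w := by
  show (FreeMonoid.toList u ++ FreeMonoid.toList w).count (0 : Fin 2) = _
  rw [List.count_append]
lemma c1_mul (u w : FreeMonoid (Fin 2)) : c1 (u * w) = c1 u + c1 w := by
  show (FreeMonoid.toList u ++ FreeMonoid.toList w).count (1 : Fin 2) = _
  rw [List.count_append]
lemma c0_of0 : c0 (FreeMonoid.of (0 : Fin 2)) = 1 := by decide
lemma c1_of0 : c1 (FreeMonoid.of (0 : Fin 2)) = 0 := by decide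
lemma c0_of1 : c0 (FreeMonoid.of (1 : Fin 2)) = 0 := by decide
lemma c1_of1 : c1 (FreeMonoid.of (1 : Fin 2)) = 1 := by decide

lemma Q_mul_left (g : FreeMonoid (Fin 2)) (p t p' t' : ℕ)
    (h : ∀ w : FreeMonoid (Fin 2),
      (c0 g + c0 w = p' ∧ c1 g + c1 w = t') ↔ (c0 w = p ∧ c1 w = t))
    (m : Bm K) :
    Q K p' t' (single g (1:K) * m) = single g (1:K) * Q K p t m := by
  induction m using MonoidAlgebra.induction_linear with
  | zero => simp
  | add f g' hf hg => rw [mul_add, map_add, map_add, mul_add, hf, hg]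
  | single w c =>
    rw [single_mul_single, one_mul, Q_single, Q_single, c0_mul, c1_mul]
    by_cases hc : c0 w = p ∧ c1 w = t
    · rw [if_pos ((h w).mpr hc), if_pos hc, single_mul_single, one_mul]
    · rw [if_neg (fun hc' => hc ((h w).mp hc')), if_neg hc, mul_zero]

lemma Q_mul_left_zero (g : FreeMonoid (Fin 2)) (p' t' : ℕ)
    (h : ∀ w : FreeMonoid (Fin 2), ¬(c0 g + c0 w = p' ∧ c1 g + c1 w = t'))
    (m : Bm K) :
    Q K p' t' (single g (1:K) * m) = 0 := by
  induction m using MonoidAlgebra.induction_linear with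
  | zero => simp
  | add f g' hf hg => rw [mul_add, map_add, hf, hg, add_zero]
  | single w c =>
    rw [single_mul_single, one_mul, Q_single, c0_mul, c1_mul, if_neg (h w)]

lemma Q_mul_right (g : FreeMonoid (Fin 2)) (p t p' t' : ℕ)
    (h : ∀ w : FreeMonoid (Fin 2),
      (c0 w + c0 g = p' ∧ c1 w + c1 g = t') ↔ (c0 w = p ∧ c1 w = t))
    (m : Bm K) :
    Q K p' t' (m * single g (1:K)) = Q K p t m * single g (1:K) := by
  induction m using MonoidAlgebra.induction_linear with
  | zero => simp
  | add f g' hf hg => rw [add_mul, map_add, map_add, add_mul, hf, hg]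
  | single w c =>
    rw [single_mul_single, mul_one, Q_single, Q_single, c0_mul, c1_mul]
    by_cases hc : c0 w = p ∧ c1 w = t
    · rw [if_pos ((h w).mpr hc), if_pos hc, single_mul_single, mul_one]
    · rw [if_neg (fun hc' => hc ((h w).mp hc')), if_neg hc, zero_mul]

lemma Q_mul_right_zero (g : FreeMonoid (Fin 2)) (p' t' : ℕ)
    (h : ∀ w : FreeMonoid (Fin 2), ¬(c0 w + c0 g = p' ∧ c1 w + c1 g = t'))
    (m : Bm K) :
    Q K p' t' (m * single g (1:K)) = 0 := by
  induction m using MonoidAlgebra.induction_linear with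
  | zero => simp
  | add f g' hf hg => rw [add_mul, map_add, hf, hg, add_zero]
  | single w c =>
    rw [single_mul_single, mul_one, Q_single, c0_mul, c1_mul, if_neg (h w)]

lemma Q_coeff (p t : ℕ) (m : Bm K) (w : FreeMonoid (Fin 2))
    (h : c0 w = p ∧ c1 w = t) : (Q K p t m).coeff w = m.coeff w := by
  induction m using MonoidAlgebra.induction_linear with
  | zero => simp
  | add f g hf hg =>
    rw [map_add]
    show (Q K p t f + Q K p t g).coeff w = (f + g).coeff w
    rw [MonoidAlgebra.coeff_add, MonoidAlgebra.coeff_add, Finsupp.add_apply, Finsupp.add_apply, hf, hg]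
  | single w' c =>
    rw [Q_single]
    by_cases hc : c0 w' = p ∧ c1 w' = t
    · rw [if_pos hc]
    · rw [if_neg hc]
      have hne : w' ≠ w := fun he => hc (he ▸ h)
      show (0 : Bm K).coeff w = Finsupp.single w' c w
      rw [Finsupp.single_eq_of_ne' hne]; rfl

def EA (K : Type*) [CommRing K] : FreeAlgebra K (Fin 2) ≃ₐ[K] Bm K :=
  FreeAlgebra.equivMonoidAlgebraFreeMonoid

lemma repr_eq (z : FreeAlgebra K (Fin 2)) :
    (FreeAlgebra.basisFreeMonoid K (Fin 2)).repr z = (EA K z).coeff := by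
  rw [FreeAlgebra.basisFreeMonoid, Module.Basis.map_repr]
  simp [EA]

lemma basis_eq (w : FreeMonoid (Fin 2)) :
    FreeAlgebra.basisFreeMonoid K (Fin 2) w = (EA K).symm (single w 1) := by
  rw [FreeAlgebra.basisFreeMonoid, Module.Basis.map_apply]
  simp [EA]

lemma bidegProj_eq (p t : ℕ) (z : FreeAlgebra K (Fin 2)) :
    bidegProj K p t z = (EA K).symm (Q K p t (EA K z)) := by
  rw [bidegProj, repr_eq]
  generalize (EA K z) = m
  set f : FreeMonoid (Fin 2) → K → FreeAlgebra K (Fin 2) := fun w c =>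
    if (FreeMonoid.toList w).count (0 : Fin 2) = p ∧ (FreeMonoid.toList w).count 1 = t
    then c • FreeAlgebra.basisFreeMonoid K (Fin 2) w else 0 with hf
  have hf0 : ∀ w, f w 0 = 0 := by intro w; simp [hf]
  have hfadd : ∀ w (c₁ c₂ : K), f w (c₁ + c₂) = f w c₁ + f w c₂ := by
    intro w c₁ c₂
    by_cases h : c0 w = p ∧ c1 w = t
    · simp only [hf, if_pos h, add_smul]
    · simp only [hf, if_neg h, add_zero]
  induction m using MonoidAlgebra.induction_linear with
  | zero =>
    have h : (0 : Bm K).coeff.sum f = 0 := Finsupp.sum_zero_index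
    rw [h, map_zero, map_zero]
  | add m₁ m₂ h₁ h₂ =>
    have h : (m₁ + m₂).coeff.sum f = m₁.coeff.sum f + m₂.coeff.sum f := Finsupp.sum_add_index' hf0 hfadd
    rw [h, map_add, map_add, h₁, h₂]
  | single w c =>
    have h : (single w c : Bm K).coeff.sum f = f w c := Finsupp.sum_single_index (hf0 w)
    rw [h, Q_single]
    by_cases hc : c0 w = p ∧ c1 w = t
    · rw [if_pos hc]
      show f w c = (EA K).symm (single w c)
      have hfv : f w c = c • FreeAlgebra.basisFreeMonoid K (Fin 2) w := if_pos hc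
      rw [hfv, basis_eq, ← map_smul]
      congr 1
      rw [MonoidAlgebra.smul_single', mul_one]
    · rw [if_neg hc, map_zero]
      show f w c = 0
      exact if_neg hc

lemma EA_bidegProj (p t : ℕ) (z : FreeAlgebra K (Fin 2)) :
    EA K (bidegProj K p t z) = Q K p t (EA K z) := by
  rw [bidegProj_eq, AlgEquiv.apply_symm_apply]

lemma EA_iota (i : Fin 2) : EA K (FreeAlgebra.ι K i) = single (FreeMonoid.of i) (1:K) := by
  simp [EA, FreeAlgebra.equivMonoidAlgebraFreeMonoid]

lemma EA_algebraMap (c : K) :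
    EA K (algebraMap K (FreeAlgebra K (Fin 2)) c) = single (1 : FreeMonoid (Fin 2)) c := by
  rw [AlgEquiv.commutes, Algebra.algebraMap_eq_smul_one]
  show c • (single (1 : FreeMonoid (Fin 2)) (1:K)) = _
  rw [MonoidAlgebra.smul_single', mul_one]

-- linearity of bidegProj
lemma bidegProj_add (p t : ℕ) (z z' : FreeAlgebra K (Fin 2)) :
    bidegProj K p t (z + z') = bidegProj K p t z + bidegProj K p t z' := by
  simp only [bidegProj_eq, map_add]

lemma bidegProj_sub (p t : ℕ) (z z' : FreeAlgebra K (Fin 2)) :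
    bidegProj K p t (z - z') = bidegProj K p t z - bidegProj K p t z' := by
  simp only [bidegProj_eq, map_sub]

lemma bidegProj_neg (p t : ℕ) (z : FreeAlgebra K (Fin 2)) :
    bidegProj K p t (-z) = -bidegProj K p t z := by
  simp only [bidegProj_eq, map_neg]

lemma bidegProj_smul (p t : ℕ) (c : K) (z : FreeAlgebra K (Fin 2)) :
    bidegProj K p t (c • z) = c • bidegProj K p t z := by
  simp only [bidegProj_eq, map_smul]

lemma bidegProj_sum {ι : Type*} (p t : ℕ) (s : Finset ι) (f : ι → FreeAlgebra K (Fin 2)) :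
    bidegProj K p t (∑ i ∈ s, f i) = ∑ i ∈ s, bidegProj K p t (f i) := by
  simp only [bidegProj_eq, map_sum]

lemma bidegProj_algebraMap (p t : ℕ) (h : p ≠ 0 ∨ t ≠ 0) (c : K) :
    bidegProj K p t (algebraMap K (FreeAlgebra K (Fin 2)) c) = 0 := by
  apply (EA K).injective
  rw [EA_bidegProj, EA_algebraMap, Q_single, map_zero]
  rw [if_neg]
  rintro ⟨h0, h1⟩
  have e0 : c0 (1 : FreeMonoid (Fin 2)) = 0 := by decide
  have e1 : c1 (1 : FreeMonoid (Fin 2)) = 0 := by decide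
  rw [e0] at h0; rw [e1] at h1
  omega

-- the eight projection/multiplication lemmas
lemma projL0succ (p t : ℕ) (u : FreeAlgebra K (Fin 2)) :
    bidegProj K (p+1) t (FreeAlgebra.ι K 0 * u) = FreeAlgebra.ι K 0 * bidegProj K p t u := by
  apply (EA K).injective
  have h1 : EA K (FreeAlgebra.ι K 0 * u) = single (FreeMonoid.of 0) (1:K) * EA K u := by
    rw [map_mul, EA_iota]
  have h2 : EA K (FreeAlgebra.ι K 0 * bidegProj K p t u)
      = single (FreeMonoid.of 0) (1:K) * Q K p t (EA K u) := by
    rw [map_mul, EA_iota, EA_bidegProj]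
  rw [EA_bidegProj, h1, h2]
  refine Q_mul_left _ p t _ _ (fun w => ?_) _
  rw [c0_of0, c1_of0]
  omega

lemma projL0zero (t : ℕ) (u : FreeAlgebra K (Fin 2)) :
    bidegProj K 0 t (FreeAlgebra.ι K 0 * u) = 0 := by
  apply (EA K).injective
  have h1 : EA K (FreeAlgebra.ι K 0 * u) = single (FreeMonoid.of 0) (1:K) * EA K u := by
    rw [map_mul, EA_iota]
  rw [EA_bidegProj, h1, map_zero]
  refine Q_mul_left_zero _ _ _ (fun w => ?_) _
  rw [c0_of0]
  omega

lemma projL1succ (p t : ℕ) (u : FreeAlgebra K (Fin 2)) :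
    bidegProj K p (t+1) (FreeAlgebra.ι K 1 * u) = FreeAlgebra.ι K 1 * bidegProj K p t u := by
  apply (EA K).injective
  have h1 : EA K (FreeAlgebra.ι K 1 * u) = single (FreeMonoid.of 1) (1:K) * EA K u := by
    rw [map_mul, EA_iota]
  have h2 : EA K (FreeAlgebra.ι K 1 * bidegProj K p t u)
      = single (FreeMonoid.of 1) (1:K) * Q K p t (EA K u) := by
    rw [map_mul, EA_iota, EA_bidegProj]
  rw [EA_bidegProj, h1, h2]
  refine Q_mul_left _ p t _ _ (fun w => ?_) _
  rw [c0_of1, c1_of1]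
  omega

lemma projL1zero (p : ℕ) (u : FreeAlgebra K (Fin 2)) :
    bidegProj K p 0 (FreeAlgebra.ι K 1 * u) = 0 := by
  apply (EA K).injective
  have h1 : EA K (FreeAlgebra.ι K 1 * u) = single (FreeMonoid.of 1) (1:K) * EA K u := by
    rw [map_mul, EA_iota]
  rw [EA_bidegProj, h1, map_zero]
  refine Q_mul_left_zero _ _ _ (fun w => ?_) _
  rw [c1_of1]
  omega

lemma projR0succ (p t : ℕ) (u : FreeAlgebra K (Fin 2)) :
    bidegProj K (p+1) t (u * FreeAlgebra.ι K 0) = bidegProj K p t u * FreeAlgebra.ι K 0 := by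
  apply (EA K).injective
  have h1 : EA K (u * FreeAlgebra.ι K 0) = EA K u * single (FreeMonoid.of 0) (1:K) := by
    rw [map_mul, EA_iota]
  have h2 : EA K (bidegProj K p t u * FreeAlgebra.ι K 0)
      = Q K p t (EA K u) * single (FreeMonoid.of 0) (1:K) := by
    rw [map_mul, EA_iota, EA_bidegProj]
  rw [EA_bidegProj, h1, h2]
  refine Q_mul_right _ p t _ _ (fun w => ?_) _
  rw [c0_of0, c1_of0]
  omega

lemma projR1succ (p t : ℕ) (u : FreeAlgebra K (Fin 2)) :
    bidegProj K p (t+1) (u * FreeAlgebra.ι K 1) = bidegProj K p t u * FreeAlgebra.ι K 1 := by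
  apply (EA K).injective
  have h1 : EA K (u * FreeAlgebra.ι K 1) = EA K u * single (FreeMonoid.of 1) (1:K) := by
    rw [map_mul, EA_iota]
  have h2 : EA K (bidegProj K p t u * FreeAlgebra.ι K 1)
      = Q K p t (EA K u) * single (FreeMonoid.of 1) (1:K) := by
    rw [map_mul, EA_iota, EA_bidegProj]
  rw [EA_bidegProj, h1, h2]
  refine Q_mul_right _ p t _ _ (fun w => ?_) _
  rw [c0_of1, c1_of1]
  omega

lemma projR1zero (p : ℕ) (u : FreeAlgebra K (Fin 2)) :
    bidegProj K p 0 (u * FreeAlgebra.ι K 1) = 0 := by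
  apply (EA K).injective
  have h1 : EA K (u * FreeAlgebra.ι K 1) = EA K u * single (FreeMonoid.of 1) (1:K) := by
    rw [map_mul, EA_iota]
  rw [EA_bidegProj, h1, map_zero]
  refine Q_mul_right_zero _ _ _ (fun w => ?_) _
  rw [c1_of1]
  omega

-- uniqueness of the constant/dx/dy decomposition
def ev (m : Bm K) : FreeMonoid (Fin 2) → K := m.coeff

lemma mul_of_ne_one (g : FreeMonoid (Fin 2)) (i : Fin 2) :
    g * FreeMonoid.of i ≠ 1 := by
  intro h
  have h2 := congrArg FreeMonoid.toList h
  rw [FreeMonoid.toList_mul, FreeMonoid.toList_one] at h2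
  simpa using h2

lemma not_ends (g d : FreeMonoid (Fin 2)) {i j : Fin 2} (hij : i ≠ j) :
    g * FreeMonoid.of i ≠ d * FreeMonoid.of j := by
  intro h
  have h2 := congrArg (fun w => (FreeMonoid.toList w).getLast?) h
  simp only [FreeMonoid.toList_mul, FreeMonoid.toList_of] at h2
  rw [List.getLast?_concat, List.getLast?_concat] at h2
  exact hij (Option.some_injective _ h2)

lemma unique_B (c : K) (U V : Bm K)
    (h : single (1 : FreeMonoid (Fin 2)) c + U * single (FreeMonoid.of 0) 1
        + V * single (FreeMonoid.of 1) 1 = 0) :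
    U = 0 ∧ V = 0 ∧ c = 0 := by
  have key : ∀ (i : Fin 2) (g : FreeMonoid (Fin 2)),
      ev (single (1 : FreeMonoid (Fin 2)) c + U * single (FreeMonoid.of 0) 1
        + V * single (FreeMonoid.of 1) 1) (g * FreeMonoid.of i) = 0 := by
    intro i g; rw [h]; rfl
  have hU : U = 0 := by
    apply MonoidAlgebra.coeff_injective
    apply Finsupp.ext
    intro g
    have hc := key 0 g
    have h1 : ev (single (1 : FreeMonoid (Fin 2)) c + U * single (FreeMonoid.of 0) 1
          + V * single (FreeMonoid.of 1) 1) (g * FreeMonoid.of 0)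
        = ev (single (1 : FreeMonoid (Fin 2)) c) (g * FreeMonoid.of 0)
          + ev (U * single (FreeMonoid.of 0) (1:K)) (g * FreeMonoid.of 0)
          + ev (V * single (FreeMonoid.of 1) (1:K)) (g * FreeMonoid.of 0) := rfl
    have h2 : ev (single (1 : FreeMonoid (Fin 2)) c : Bm K) (g * FreeMonoid.of 0) = 0 :=
      Finsupp.single_eq_of_ne' (fun he => mul_of_ne_one g 0 he.symm)
    have h3 : ev (U * single (FreeMonoid.of 0) (1:K)) (g * FreeMonoid.of 0) = ev U g * 1 :=
      MonoidAlgebra.coeff_mul_single_eq_coeff_mul (x := U) g (fun a _ => mul_left_inj _)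
    have h4 : ev (V * single (FreeMonoid.of 1) (1:K)) (g * FreeMonoid.of 0) = 0 :=
      MonoidAlgebra.mul_single_apply_of_not_exists_mul _ _ (by
        rintro ⟨d, hd⟩; exact not_ends g d (by decide) hd)
    rw [h1, h2, h3, h4, mul_one, zero_add, add_zero] at hc
    exact hc
  have hV : V = 0 := by
    apply MonoidAlgebra.coeff_injective
    apply Finsupp.ext
    intro g
    have hc := key 1 g
    have h1 : ev (single (1 : FreeMonoid (Fin 2)) c + U * single (FreeMonoid.of 0) 1
          + V * single (FreeMonoid.of 1) 1) (g * FreeMonoid.of 1)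
        = ev (single (1 : FreeMonoid (Fin 2)) c) (g * FreeMonoid.of 1)
          + ev (U * single (FreeMonoid.of 0) (1:K)) (g * FreeMonoid.of 1)
          + ev (V * single (FreeMonoid.of 1) (1:K)) (g * FreeMonoid.of 1) := rfl
    have h2 : ev (single (1 : FreeMonoid (Fin 2)) c : Bm K) (g * FreeMonoid.of 1) = 0 :=
      Finsupp.single_eq_of_ne' (fun he => mul_of_ne_one g 1 he.symm)
    have h3 : ev (V * single (FreeMonoid.of 1) (1:K)) (g * FreeMonoid.of 1) = ev V g * 1 :=
      MonoidAlgebra.coeff_mul_single_eq_coeff_mul (x := V) g (fun a _ => mul_left_inj _)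
    have h4 : ev (U * single (FreeMonoid.of 0) (1:K)) (g * FreeMonoid.of 1) = 0 :=
      MonoidAlgebra.mul_single_apply_of_not_exists_mul _ _ (by
        rintro ⟨d, hd⟩; exact not_ends g d (by decide) hd)
    rw [h1, h2, h3, h4, mul_one, zero_add, zero_add] at hc
    exact hc
  refine ⟨hU, hV, ?_⟩
  rw [hU, hV, zero_mul, zero_mul, add_zero, add_zero] at h
  exact (MonoidAlgebra.single_eq_zero).mp h

lemma unique_A (c : K) (u v : FreeAlgebra K (Fin 2))
    (h : algebraMap K (FreeAlgebra K (Fin 2)) c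
        + u * FreeAlgebra.ι K 0 + v * FreeAlgebra.ι K 1 = 0) :
    u = 0 ∧ v = 0 ∧ c = 0 := by
  have hB := congrArg (EA K) h
  rw [map_add, map_add, map_mul, map_mul, EA_algebraMap, EA_iota, EA_iota, map_zero] at hB
  obtain ⟨hU, hV, hc⟩ := unique_B c (EA K u) (EA K v) hB
  refine ⟨?_, ?_, hc⟩
  · have := congrArg (EA K).symm hU
    rw [AlgEquiv.symm_apply_apply, map_zero] at this
    exact this
  · have := congrArg (EA K).symm hV
    rw [AlgEquiv.symm_apply_apply, map_zero] at this
    exact this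

lemma decomp_unique (c₁ c₂ : K) (u₁ u₂ v₁ v₂ : FreeAlgebra K (Fin 2))
    (h : algebraMap K (FreeAlgebra K (Fin 2)) c₁ + u₁ * FreeAlgebra.ι K 0
          + v₁ * FreeAlgebra.ι K 1
        = algebraMap K (FreeAlgebra K (Fin 2)) c₂ + u₂ * FreeAlgebra.ι K 0
          + v₂ * FreeAlgebra.ι K 1) :
    u₁ = u₂ ∧ v₁ = v₂ ∧ c₁ = c₂ := by
  have h0 : algebraMap K (FreeAlgebra K (Fin 2)) (c₁ - c₂)
      + (u₁ - u₂) * FreeAlgebra.ι K 0 + (v₁ - v₂) * FreeAlgebra.ι K 1 = 0 := by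
    rw [map_sub, sub_mul, sub_mul]
    rw [← sub_eq_zero.mpr h]
    abel
  obtain ⟨hu, hv, hc⟩ := unique_A _ _ _ h0
  exact ⟨sub_eq_zero.mp hu, sub_eq_zero.mp hv, sub_eq_zero.mp hc⟩

-- basis words in the free algebra
def AW (K : Type*) [CommRing K] : List (Fin 2) → FreeAlgebra K (Fin 2)
  | [] => 1
  | i :: l => FreeAlgebra.ι K i * AW K l

lemma EA_AW (l : List (Fin 2)) :
    EA K (AW K l) = single (FreeMonoid.ofList l) (1:K) := by
  induction l with
  | nil =>
    rw [AW, map_one]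
    rfl
  | cons i l ih =>
    rw [AW, map_mul, EA_iota, ih, single_mul_single, one_mul]
    rfl

lemma bidegProj_AW (p t : ℕ) (l : List (Fin 2)) :
    bidegProj K p t (AW K l)
      = if l.count 0 = p ∧ l.count 1 = t then AW K l else 0 := by
  apply (EA K).injective
  rw [EA_bidegProj, EA_AW, Q_single]
  by_cases h : l.count 0 = p ∧ l.count 1 = t
  · have h2 : c0 (FreeMonoid.ofList l) = p ∧ c1 (FreeMonoid.ofList l) = t := h
    rw [if_pos h2, if_pos h, EA_AW]
  · have h2 : ¬(c0 (FreeMonoid.ofList l) = p ∧ c1 (FreeMonoid.ofList l) = t) := h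
    rw [if_neg h2, if_neg h, map_zero]

lemma count_eq_c0 (l : List (Fin 2)) : c0 (FreeMonoid.ofList l) = l.count 0 := rfl
lemma count_eq_c1 (l : List (Fin 2)) : c1 (FreeMonoid.ofList l) = l.count 1 := rfl

-- the substitution x ↦ -x-y, y ↦ y
def Sb (K : Type*) [CommRing K] : FreeAlgebra K (Fin 2) →ₐ[K] FreeAlgebra K (Fin 2) :=
  FreeAlgebra.lift K
    ![-FreeAlgebra.ι K 0 - FreeAlgebra.ι K 1, FreeAlgebra.ι K 1]

lemma Sb_iota0 : Sb K (FreeAlgebra.ι K 0) = -FreeAlgebra.ι K 0 - FreeAlgebra.ι K 1 := by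
  rw [Sb, FreeAlgebra.lift_ι_apply]; rfl

lemma Sb_iota1 : Sb K (FreeAlgebra.ι K 1) = FreeAlgebra.ι K 1 := by
  rw [Sb, FreeAlgebra.lift_ι_apply]; rfl

lemma subst_word (l : List (Fin 2)) :
    (∀ p' t', t' < l.count 1 → bidegProj K p' t' (Sb K (AW K l)) = 0) ∧
    bidegProj K (l.count 0) (l.count 1) (Sb K (AW K l))
      = ((-1:K) ^ (l.count 0)) • AW K l := by
  induction l with
  | nil =>
    refine ⟨fun p' t' h => absurd h (by simp), ?_⟩
    have h1 := bidegProj_AW (K := K) 0 0 ([] : List (Fin 2))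
    rw [if_pos (by decide)] at h1
    show bidegProj K 0 0 (Sb K (AW K [])) = ((-1:K) ^ (0:ℕ)) • AW K []
    rw [show (Sb K (AW K ([] : List (Fin 2)))) = AW K []
        from (by rw [show AW K ([] : List (Fin 2)) = 1 from rfl, map_one]),
      h1, pow_zero, one_smul]
  | cons i l ih =>
    have hS : Sb K (AW K (i :: l)) = Sb K (FreeAlgebra.ι K i) * Sb K (AW K l) := by
      rw [AW, map_mul]
    rcases ((by decide : ∀ j : Fin 2, j = 0 ∨ j = 1) i) with rfl | rfl
    · -- i = 0
      have hc0 : (List.count (0:Fin 2) (0 :: l)) = l.count 0 + 1 := List.count_cons_self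
      have hc1 : (List.count (1:Fin 2) (0 :: l)) = l.count 1 :=
        List.count_cons_of_ne (by decide)
      have hexp : Sb K (AW K ((0:Fin 2) :: l))
          = -(FreeAlgebra.ι K 0 * Sb K (AW K l))
            - FreeAlgebra.ι K 1 * Sb K (AW K l) := by
        rw [hS, Sb_iota0, sub_mul, neg_mul]
      constructor
      · intro p' t' ht
        rw [show List.count 1 ((0:Fin 2) :: l) = l.count 1 from hc1] at ht
        rw [hexp, bidegProj_sub, bidegProj_neg]
        have hX : bidegProj K p' t' (FreeAlgebra.ι K 0 * Sb K (AW K l)) = 0 := by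
          cases p' with
          | zero => exact projL0zero _ _
          | succ p'' => rw [projL0succ, (ih.1 p'' t' ht), mul_zero]
        have hY : bidegProj K p' t' (FreeAlgebra.ι K 1 * Sb K (AW K l)) = 0 := by
          cases t' with
          | zero => exact projL1zero _ _
          | succ t'' => rw [projL1succ, (ih.1 p' t'' (by omega)), mul_zero]
        rw [hX, hY, neg_zero, sub_zero]
      · rw [show List.count 0 ((0:Fin 2) :: l) = l.count 0 + 1 from hc0,
            show List.count 1 ((0:Fin 2) :: l) = l.count 1 from hc1]
        rw [hexp, bidegProj_sub, bidegProj_neg]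
        have hY : bidegProj K (l.count 0 + 1) (l.count 1)
            (FreeAlgebra.ι K 1 * Sb K (AW K l)) = 0 := by
          cases h1 : l.count 1 with
          | zero => exact projL1zero _ _
          | succ t'' => rw [projL1succ, ih.1 _ t'' (by omega), mul_zero]
        rw [hY, sub_zero, projL0succ, ih.2, mul_smul_comm]
        rw [show AW K ((0:Fin 2) :: l) = FreeAlgebra.ι K 0 * AW K l from rfl]
        rw [pow_succ, mul_neg_one, ← neg_smul]
    · -- i = 1
      have hc0 : (List.count (0:Fin 2) (1 :: l)) = l.count 0 :=
        List.count_cons_of_ne (by decide)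
      have hc1 : (List.count (1:Fin 2) (1 :: l)) = l.count 1 + 1 := List.count_cons_self
      have hexp : Sb K (AW K ((1:Fin 2) :: l))
          = FreeAlgebra.ι K 1 * Sb K (AW K l) := by
        rw [hS, Sb_iota1]
      constructor
      · intro p' t' ht
        rw [show List.count 1 ((1:Fin 2) :: l) = l.count 1 + 1 from hc1] at ht
        rw [hexp]
        cases t' with
        | zero => exact projL1zero _ _
        | succ t'' => rw [projL1succ, ih.1 p' t'' (by omega), mul_zero]
      · rw [show List.count 0 ((1:Fin 2) :: l) = l.count 0 from hc0,
            show List.count 1 ((1:Fin 2) :: l) = l.count 1 + 1 from hc1]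
        rw [hexp, projL1succ, ih.2, mul_smul_comm]
        rfl

lemma subst_total (n k : ℕ) (hk : k < n) (ψ : FreeAlgebra K (Fin 2))
    (hweight : ∀ p t : ℕ, p + t ≠ 2 * n → bidegProj K p t ψ = 0)
    (hdepth : ∀ p t : ℕ, t < 2 * k → bidegProj K p t ψ = 0) :
    bidegProj K (2*n - 2*k) (2*k) (Sb K ψ) = bidegProj K (2*n - 2*k) (2*k) ψ := by
  set m := EA K ψ with hm
  have hzero : ∀ p t, bidegProj K p t ψ = 0 → ∀ w : FreeMonoid (Fin 2),
      (c0 w = p ∧ c1 w = t) → m.coeff w = 0 := by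
    intro p t h w hw
    have hQ : Q K p t m = 0 := by rw [← EA_bidegProj, h, map_zero]
    have h1 : (Q K p t m).coeff w = m.coeff w := Q_coeff p t m w hw
    rw [hQ] at h1
    simpa using h1.symm
  have hsupp : ∀ w ∈ m.coeff.support, (2*k < c1 w) ∨ (c1 w = 2*k ∧ c0 w = 2*n - 2*k) := by
    intro w hw
    have hne : m.coeff w ≠ 0 := Finsupp.mem_support_iff.mp hw
    by_cases h1 : 2*k < c1 w
    · exact Or.inl h1
    right
    have ht : c1 w = 2*k := by
      rcases Nat.lt_or_ge (c1 w) (2*k) with hlt | hge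
      · exact absurd (hzero _ _ (hdepth (c0 w) (c1 w) hlt) w ⟨rfl, rfl⟩) hne
      · omega
    refine ⟨ht, ?_⟩
    by_contra hp
    have hw2 : c0 w + c1 w ≠ 2*n := by omega
    exact hne (hzero _ _ (hweight (c0 w) (c1 w) hw2) w ⟨rfl, rfl⟩)
  have hψm : (EA K).symm m = ψ := by rw [hm]; exact AlgEquiv.symm_apply_apply _ _
  have h1 : m = ∑ w ∈ m.coeff.support, single w (m.coeff w) := by
    conv_lhs => rw [← MonoidAlgebra.ofCoeff_coeff m, ← Finsupp.sum_single m.coeff]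
    rw [Finsupp.sum, MonoidAlgebra.ofCoeff_sum]; rfl
  have hψ : ψ = ∑ w ∈ m.coeff.support, (m.coeff w) • AW K (FreeMonoid.toList w) := by
    rw [← hψm]
    conv_lhs => rw [h1]
    rw [map_sum]
    refine Finset.sum_congr rfl (fun w hw => ?_)
    rw [show single w (m.coeff w) = (m.coeff w) • single w (1:K) from
      (by rw [MonoidAlgebra.smul_single', mul_one]), map_smul]
    congr 1
    apply (EA K).injective
    rw [AlgEquiv.apply_symm_apply, EA_AW]
    rfl
  conv_lhs => rw [hψ]
  conv_rhs => rw [hψ]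
  rw [map_sum, bidegProj_sum, bidegProj_sum]
  refine Finset.sum_congr rfl (fun w hw => ?_)
  rw [map_smul, bidegProj_smul, bidegProj_smul]
  congr 1
  have hl0 : (FreeMonoid.toList w).count 0 = c0 w := rfl
  have hl1 : (FreeMonoid.toList w).count 1 = c1 w := rfl
  rcases hsupp w hw with hgt | ⟨ht, hp⟩
  · rw [(subst_word (FreeMonoid.toList w)).1 _ _ (by rw [hl1]; exact hgt),
      bidegProj_AW, if_neg (by rw [hl1]; omega)]
  · rw [show (2*n - 2*k) = (FreeMonoid.toList w).count 0 from (by rw [hl0, hp]),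
      show (2*k) = (FreeMonoid.toList w).count 1 from (by rw [hl1, ht])]
    rw [(subst_word (FreeMonoid.toList w)).2, bidegProj_AW, if_pos ⟨rfl, rfl⟩]
    have hone : ((-1:K) ^ ((FreeMonoid.toList w).count 0)) = 1 := by
      rw [hl0, hp]
      have he : Even (2*n - 2*k) := ⟨n-k, by omega⟩
      exact he.neg_one_pow
    rw [hone, one_smul]

end QdivAux

open QdivAux

attribute [local instance 100] LieRing.ofAssociativeRing

/-- Let `q` be a primitive `l`-th root of unity, and let `ψ` be a Lie element of weight
`2n` (with `l ∣ 2n`) and of depth at least `2k` (`k < n`), satisfying the antisymmetry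
relation `ψ(x,y) = -ψ(y,x)` and the hexagon relation
`ψ(x,y) + ψ(y,z) + ψ(z,x) = 0` for `z = -x-y`.  Let `ν(ψ) = (ψ(-x-y,x), ψ(-x-y,y))` be
the associated tangential derivation.  Then the bidegree `(2n-2k, 2k)` component of
`qdiv(ν(ψ)) = qtr(x·∂_x ψ(-x-y,x) + y·∂_y ψ(-x-y,y))` equals
`qtr(y·∂_y(ψ^{(2n-2k,2k)}))`, i.e. the difference of representatives lies in the span
`Rel` of the `q`-trace relations. -/
theorem qdiv_depth2_formula (K : Type*) [Field K] [CharZero K]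
    (l : ℕ) (hl : 1 ≤ l) (q : K) (hq : IsPrimitiveRoot q l)
    (n k : ℕ) (hk : k < n) (hdiv : l ∣ 2 * n)
    (x y : FreeAlgebra K (Fin 2)) (hx : x = FreeAlgebra.ι K 0) (hy : y = FreeAlgebra.ι K 1)
    (ψ : FreeAlgebra K (Fin 2))
    (hψLie : ψ ∈
      LieSubalgebra.lieSpan K (FreeAlgebra K (Fin 2)) (Set.range (FreeAlgebra.ι K)))
    (hweight : ∀ p t : ℕ, p + t ≠ 2 * n → bidegProj K p t ψ = 0)
    (hdepth : ∀ p t : ℕ, t < 2 * k → bidegProj K p t ψ = 0)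
    (hanti : FreeAlgebra.lift K ![y, x] ψ = -ψ)
    (hhex : ψ + FreeAlgebra.lift K ![y, -x - y] ψ + FreeAlgebra.lift K ![-x - y, x] ψ = 0)
    (a b : FreeAlgebra K (Fin 2))
    (hab : a = FreeAlgebra.lift K ![-x - y, x] ψ ∧ b = FreeAlgebra.lift K ![-x - y, y] ψ)
    (ε : FreeAlgebra K (Fin 2) →ₐ[K] K) (hεx : ε x = 0) (hεy : ε y = 0)
    (dx dy : FreeAlgebra K (Fin 2) →ₗ[K] FreeAlgebra K (Fin 2))
    (hd : ∀ z : FreeAlgebra K (Fin 2),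
      z = algebraMap K (FreeAlgebra K (Fin 2)) (ε z) + dx z * x + dy z * y)
    (Rel : Submodule K (FreeAlgebra K (Fin 2)))
    (hRel : Rel = Submodule.span K
      {z | ∃ w : FreeAlgebra K (Fin 2), ε w = 0 ∧
        (z = x * w - q • (w * x) ∨ z = y * w - q • (w * y))}) :
    bidegProj K (2 * n - 2 * k) (2 * k) (x * dx a + y * dy b) -
      y * dy (bidegProj K (2 * n - 2 * k) (2 * k) ψ) ∈ Rel := by
  obtain ⟨ha, hb⟩ := hab
  subst hx hy
  obtain ⟨p₁, hp₁⟩ : ∃ p₁, 2*n - 2*k = p₁ + 1 := ⟨2*n - 2*k - 1, by omega⟩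
  -- Step 1 : a = b - ψ
  have hcomp : (FreeAlgebra.lift K
        ![-FreeAlgebra.ι K (0 : Fin 2) - FreeAlgebra.ι K (1 : Fin 2), FreeAlgebra.ι K (1 : Fin 2)]).comp
      (FreeAlgebra.lift K ![FreeAlgebra.ι K (1 : Fin 2), FreeAlgebra.ι K (0 : Fin 2)])
      = FreeAlgebra.lift K ![FreeAlgebra.ι K (1 : Fin 2),
          -FreeAlgebra.ι K (0 : Fin 2) - FreeAlgebra.ι K (1 : Fin 2)] := by
    apply FreeAlgebra.hom_ext
    funext i
    rcases ((by decide : ∀ j : Fin 2, j = 0 ∨ j = 1) i) with rfl | rfl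
    · simp [FreeAlgebra.lift_ι_apply]
    · simp [FreeAlgebra.lift_ι_apply]
  have hyx : FreeAlgebra.lift K ![FreeAlgebra.ι K (1 : Fin 2),
      -FreeAlgebra.ι K (0 : Fin 2) - FreeAlgebra.ι K (1 : Fin 2)] ψ = -b := by
    have h5 := DFunLike.congr_fun hcomp ψ
    rw [AlgHom.comp_apply] at h5
    rw [← h5, hanti, map_neg, hb]
  have hA : a = b - ψ := by
    rw [hyx] at hhex
    rw [← ha] at hhex
    have h4 : a - (b - ψ) = 0 := by rw [← hhex]; abel
    exact sub_eq_zero.mp h4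
  -- Step 2 : projections of b and ψ agree in the target bidegree
  have hPb : bidegProj K (2*n - 2*k) (2*k) b = bidegProj K (2*n - 2*k) (2*k) ψ := by
    rw [hb]
    exact subst_total n k hk ψ hweight hdepth
  -- Step 3 : the projection commutes with x·dx and y·dy
  have hcomm : ∀ z : FreeAlgebra K (Fin 2),
      bidegProj K (2*n - 2*k) (2*k) (FreeAlgebra.ι K (0 : Fin 2) * dx z)
        = FreeAlgebra.ι K (0 : Fin 2) * dx (bidegProj K (2*n - 2*k) (2*k) z)
      ∧ bidegProj K (2*n - 2*k) (2*k) (FreeAlgebra.ι K (1 : Fin 2) * dy z)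
        = FreeAlgebra.ι K (1 : Fin 2) * dy (bidegProj K (2*n - 2*k) (2*k) z) := by
    intro z
    rcases Nat.eq_zero_or_pos (2*k) with ht0 | htpos
    · -- 2k = 0
      have hPz : bidegProj K (2*n - 2*k) (2*k) z
          = algebraMap K (FreeAlgebra K (Fin 2)) (0:K)
            + bidegProj K p₁ (2*k) (dx z) * FreeAlgebra.ι K (0 : Fin 2)
            + (0 : FreeAlgebra K (Fin 2)) * FreeAlgebra.ι K (1 : Fin 2) := by
        conv_lhs => rw [hd z]
        rw [bidegProj_add, bidegProj_add,
          bidegProj_algebraMap _ _ (Or.inl (by omega)), hp₁, projR0succ]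
        rw [ht0, projR1zero]
        rw [map_zero, zero_mul]
      obtain ⟨hu, hv, hc⟩ := decomp_unique _ _ _ _ _ _ ((hd _).symm.trans hPz)
      constructor
      · rw [hu, hp₁, projL0succ]
      · rw [hv, mul_zero, ht0, projL1zero]
    · -- 2k = t₁ + 1
      obtain ⟨t₁, ht₁⟩ : ∃ t₁, 2*k = t₁ + 1 := ⟨2*k - 1, by omega⟩
      have hPz : bidegProj K (2*n - 2*k) (2*k) z
          = algebraMap K (FreeAlgebra K (Fin 2)) (0:K)
            + bidegProj K p₁ (2*k) (dx z) * FreeAlgebra.ι K (0 : Fin 2)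
            + bidegProj K (2*n - 2*k) t₁ (dy z) * FreeAlgebra.ι K (1 : Fin 2) := by
        conv_lhs => rw [hd z]
        rw [bidegProj_add, bidegProj_add,
          bidegProj_algebraMap _ _ (Or.inl (by omega)), hp₁, projR0succ]
        rw [ht₁, projR1succ]
        rw [map_zero]
      obtain ⟨hu, hv, hc⟩ := decomp_unique _ _ _ _ _ _ ((hd _).symm.trans hPz)
      constructor
      · rw [hu, hp₁, projL0succ]
      · rw [hv, hp₁, ht₁, projL1succ]
  -- assemble
  have hgoal : bidegProj K (2*n - 2*k) (2*k)
        (FreeAlgebra.ι K (0 : Fin 2) * dx a + FreeAlgebra.ι K (1 : Fin 2) * dy b)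
      - FreeAlgebra.ι K (1 : Fin 2) * dy (bidegProj K (2*n - 2*k) (2*k) ψ) = 0 := by
    rw [hA, map_sub, mul_sub, bidegProj_add, bidegProj_sub,
      (hcomm b).1, (hcomm ψ).1, (hcomm b).2, hPb]
    abel
  rw [hgoal]
  exact Submodule.zero_mem Rel
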